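/- A dominating set D of a graph G is irreducible if and only if every vertex in D either has a D-private closed neighbor or is adjacent to a D-leaf. -/

import Mathlib

open SimpleGraph Finset

/-- Open neighborhood of a set: vertices having a neighbor in `S`. -/
def nbhd {V : Type*} (G : SimpleGraph V) (S : Set V) : Set V := {v | ∃ u ∈ S, G.Adj u v}

/-- Closed neighborhood of a vertex. -/
def closedNbhd {V : Type*} (G : SimpleGraph V) (v : V) : Set V := insert v (G.neighborSet v)

/-- `S` dominates vertex `v`. -/
def Dominates {V : Type*} (G : SimpleGraph V) (S : Set V) (v : V) : Prop :=
  v ∈ S ∨ ∃ u ∈ S, G.Adj u v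

/-- `D` is a dominating set of `G`. -/
def IsDomSet {V : Type*} (G : SimpleGraph V) (D : Set V) : Prop := ∀ v, Dominates G D v

/-- `D` is a minimal dominating set of `G`. -/
def IsMinDomSet {V : Type*} (G : SimpleGraph V) (D : Set V) : Prop :=
  IsDomSet G D ∧ ∀ D' ⊂ D, ¬ IsDomSet G D'

/-- `D` is an irreducible dominating set of `G`. -/
def IsIrredDomSet {V : Type*} (G : SimpleGraph V) (D : Set V) : Prop :=
  IsDomSet G D ∧ ¬ ∃ u ∈ D, IsDomSet G (D \ {u}) ∧ nbhd G D = nbhd G (D \ {u})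

/-- A `D`-leaf: a vertex of `D` with exactly one neighbor in `D`. -/
def IsDLeaf {V : Type*} (G : SimpleGraph V) (D : Set V) (v : V) : Prop :=
  v ∈ D ∧ ∃ u, G.neighborSet v ∩ D = {u}

theorem stmt4 {V : Type*} (G : SimpleGraph V) (D : Set V)
    (hD : IsDomSet G D) :
    IsIrredDomSet G D ↔
      ∀ u ∈ D, (∃ v, closedNbhd G v ∩ D = {u}) ∨ ∃ v, IsDLeaf G D v ∧ G.Adj u v := by
  constructor
  · rintro ⟨-, hirr⟩ u hu
    by_contra hcon
    push_neg at hcon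
    obtain ⟨hpriv, hleaf⟩ := hcon
    apply hirr
    refine ⟨u, hu, ?_, ?_⟩
    · intro v
      rcases hD v with hv | ⟨w, hw, hadj⟩
      · by_cases hvu : v = u
        · subst hvu
          have hne : ∃ w ∈ closedNbhd G v ∩ D, w ≠ v := by
            by_contra h
            push_neg at h
            apply hpriv v
            exact Set.eq_singleton_iff_unique_mem.mpr
              ⟨⟨Set.mem_insert _ _, hv⟩, fun x hx => h x hx⟩
          obtain ⟨w, ⟨hw1, hw2⟩, hwv⟩ := hne
          have hadj : G.Adj v w := by
            rcases hw1 with h | h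
            · exact absurd h hwv
            · exact h
          exact Or.inr ⟨w, ⟨hw2, hwv⟩, hadj.symm⟩
        · exact Or.inl ⟨hv, hvu⟩
      · by_cases hwu : w = u
        · subst w
          by_cases hvD : v ∈ D
          · by_cases hvu : v = u
            · subst hvu
              exact absurd hadj (G.loopless.irrefl _)
            · exact Or.inl ⟨hvD, hvu⟩
          · have hex : ∃ x, x ∈ G.neighborSet v ∩ D ∧ x ≠ u := by
              by_contra h
              push_neg at h
              apply hpriv v
              ext x
              constructor
              · rintro ⟨hx1, hx2⟩
                rcases hx1 with rfl | hx1
                · exact absurd hx2 hvD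
                · exact h x ⟨hx1, hx2⟩
              · rintro rfl
                exact ⟨Or.inr hadj.symm, hu⟩
            obtain ⟨x, ⟨hx1, hx2⟩, hxu⟩ := hex
            exact Or.inr ⟨x, ⟨hx2, hxu⟩, hx1.symm⟩
        · exact Or.inr ⟨w, ⟨hw, hwu⟩, hadj⟩
    · ext v
      constructor
      · rintro ⟨w, hw, hadj⟩
        by_cases hwu : w = u
        · subst w
          by_contra h
          have hNv : G.neighborSet v ∩ D = {u} := by
            ext x
            constructor
            · rintro ⟨hx1, hx2⟩
              by_contra hxu
              exact h ⟨x, ⟨hx2, hxu⟩, hx1.symm⟩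
            · rintro rfl
              exact ⟨hadj.symm, hu⟩
          by_cases hvD : v ∈ D
          · exact hleaf v ⟨hvD, u, hNv⟩ hadj
          · apply hpriv v
            ext x
            constructor
            · rintro ⟨hx1, hx2⟩
              rcases hx1 with rfl | hx1
              · exact absurd hx2 hvD
              · have : x ∈ G.neighborSet v ∩ D := ⟨hx1, hx2⟩
                rwa [hNv] at this
            · rintro rfl
              exact ⟨Or.inr hadj.symm, hu⟩
        · exact ⟨w, ⟨hw, hwu⟩, hadj⟩
      · rintro ⟨w, hw, hadj⟩
        exact ⟨w, hw.1, hadj⟩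
  · intro hcond
    refine ⟨hD, ?_⟩
    rintro ⟨u, hu, hdom', heq⟩
    rcases hcond u hu with ⟨v, hv⟩ | ⟨v, ⟨hvD, w, hNv⟩, hadj⟩
    · rcases hdom' v with ⟨hvD, hvu⟩ | ⟨x, ⟨hxD, hxu⟩, hadjxv⟩
      · apply hvu
        have : v ∈ closedNbhd G v ∩ D := ⟨Set.mem_insert _ _, hvD⟩
        rwa [hv] at this
      · apply hxu
        have : x ∈ closedNbhd G v ∩ D := ⟨Or.inr hadjxv.symm, hxD⟩
        rwa [hv] at this
    · have hwu : w = u := by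
        have : u ∈ G.neighborSet v ∩ D := ⟨hadj.symm, hu⟩
        rw [hNv] at this
        exact this.symm
      subst w
      have : v ∈ nbhd G (D \ {u}) := heq ▸ ⟨u, hu, hadj⟩
      obtain ⟨x, ⟨hxD, hxu⟩, hadjxv⟩ := this
      apply hxu
      have : x ∈ G.neighborSet v ∩ D := ⟨hadjxv.symm, hxD⟩
      rwa [hNv] at this
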